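/- For every integer k > 0 and every d ≥ 0, the set V_d(k) := {(m_0, …, m_d) ∈ U_d(k) : m_0 > 0} is empty if and only if d ≥ L_k. -/

import Mathlib

open Polynomial

/-- The power sum `S_d(-k) = ∑_{a monic, deg a = d} a^k`, written as a sum over the
lower-order coefficients of the monic polynomial. -/
noncomputable def powerSum (Fq : Type) [Field Fq] [Fintype Fq] (d k : ℕ) : Polynomial Fq :=
  ∑ c : Fin d → Fq, (X ^ d + ∑ i : Fin d, C (c i) * X ^ (i : ℕ)) ^ k

/-- `m` sums to `k` with no carrying of digits in base `p`. -/
def NoCarry (p : ℕ) {n : ℕ} (m : Fin n → ℕ) (k : ℕ) : Prop :=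
  (∑ i, m i) = k ∧ ∀ j : ℕ, (∑ i, m i / p ^ j % p) = k / p ^ j % p

/-- The set `U_d(k)`. -/
def Uset (p q d k : ℕ) : Set (Fin (d + 1) → ℕ) :=
  {m | NoCarry p m k ∧ ∀ i : Fin (d + 1), 0 < (i : ℕ) → 0 < m i ∧ (q - 1) ∣ m i}

/-- The weight of an element of `U_d(k)`. -/
def wtU {d : ℕ} (m : Fin (d + 1) → ℕ) : ℕ :=
  ∑ i : Fin (d + 1), (d - (i : ℕ)) * m i

/-- Strict lexicographic order on tuples. -/
def LexLT {n : ℕ} (x y : Fin n → ℕ) : Prop :=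
  ∃ i, (∀ j, j < i → x j = y j) ∧ x i < y i

/-- Lexicographic order on tuples. -/
def LexLE {n : ℕ} (x y : Fin n → ℕ) : Prop := x = y ∨ LexLT x y

/-- `L_k := min_{0 ≤ i < f} l(k p^i)/(q-1)` where `l` is the base-`q` digit sum, `q = p^f`. -/
noncomputable def Lval (p f k : ℕ) (hf : 0 < f) : ℚ :=
  (Finset.range f).inf' ⟨0, Finset.mem_range.mpr hf⟩
    (fun i => ((Nat.digits (p ^ f) (k * p ^ i)).sum : ℚ) / ((p : ℚ) ^ f - 1))

/-- The set `W_d(N)` of compositions. -/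
def Wset (p q d N : ℕ) : Set (Fin d → ℕ) :=
  {Y | NoCarry p Y N ∧ ∀ i : Fin d, (i : ℕ) + 1 < d → 0 < Y i ∧ (q - 1) ∣ Y i}

/-- The weight of a composition. -/
def wtW {d : ℕ} (Y : Fin d → ℕ) : ℕ := ∑ i : Fin d, ((i : ℕ) + 1) * Y i

/-- `X` is the modest (lexicographically largest) composition in `W_d(N)`. -/
def Modest (p q : ℕ) {d : ℕ} (N : ℕ) (X : Fin d → ℕ) : Prop :=
  X ∈ Wset p q d N ∧ ∀ Y ∈ Wset p q d N, LexLE Y X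

/-- `X` is an optimal (minimum weight) composition in `W_d(N)`. -/
def Optimal (p q : ℕ) {d : ℕ} (N : ℕ) (X : Fin d → ℕ) : Prop :=
  X ∈ Wset p q d N ∧ ∀ Y ∈ Wset p q d N, wtW X ≤ wtW Y

/-- `Γ(n) : Fin f → ℕ`, summing the base-`p` digits of `n` in each residue class mod `f`. -/
def Gamma (p f n : ℕ) : Fin f → ℕ :=
  fun i => ∑ j ∈ Finset.range (Nat.log p n + 1), if j % f = (i : ℕ) then n / p ^ j % p else 0

/-- The cyclic matrix `E`, as a map: `(E x)_i = p x_{i+1} - x_i`, indices mod `f`. -/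
def Emap (p : ℕ) {R : Type} [Ring R] {f : ℕ} (x : Fin f → R) : Fin f → R :=
  fun i => (p : R) * x ⟨((i : ℕ) + 1) % f, Nat.mod_lt _ i.pos⟩ - x i

/-- `𝔍 = {Γ(n) : n > 0 is q-even}`, where `q = p ^ f`. -/
def Jfrak (p f : ℕ) : Set (Fin f → ℕ) :=
  {w | ∃ n : ℕ, 0 < n ∧ (p ^ f - 1) ∣ n ∧ Gamma p f n = w}

/-- `I_d`. -/
def Iset (p f d : ℕ) : Set (Fin f → ℕ) :=
  {u | (∃ n : ℕ, 0 < n ∧ Gamma p f n = u) ∧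
    ∃ v : Fin (d - 1) → Fin f → ℕ, (∀ j, v j ∈ Jfrak p f) ∧ (∑ j, v j) < u}

/-- `J_d`. -/
def Jset (p f d : ℕ) : Set (Fin f → ℕ) :=
  if d = 0 then ∅ else Jfrak p f ∩ (Iset p f d \ Iset p f (d + 1))

/-- A composition is `τ`-monotonic. -/
def TauMonotonic (p f : ℕ) {d : ℕ} (X : Fin d → ℕ) : Prop :=
  ∀ i j : Fin d, i < j → ∀ m n : ℕ, X i / p ^ m % p ≠ 0 → X j / p ^ n % p ≠ 0 →
    m % f = n % f → n ≤ m

/-- `W_d^B(N)`: compositions in `W_d(N)` whose `Γ`-matrix is `B`. -/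
def WBset (p f d N : ℕ) (B : Fin d → Fin f → ℕ) : Set (Fin d → ℕ) :=
  {Y | Y ∈ Wset p (p ^ f) d N ∧ ∀ j, Gamma p f (Y j) = B j}

/-- The multizeta value `ζ(-k_1, …, -k_r)` as a (finite) sum over strictly
decreasing tuples of degrees. -/
noncomputable def multizeta (Fq : Type) [Field Fq] [Fintype Fq] {r : ℕ} (k : Fin r → ℕ) :
    Polynomial Fq :=
  ∑ᶠ (dt : Fin r → ℕ) (_ : StrictAnti dt), ∏ i, powerSum Fq (dt i) (k i)


namespace SheatsAux

open Finset
open Fin.CommRing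

/-- base-`p` digit of `n` at position `j`. -/
def dig (p n j : ℕ) : ℕ := n / p ^ j % p

lemma dig_lt {p : ℕ} (hp : 1 < p) (n j : ℕ) : dig p n j < p :=
  Nat.mod_lt _ (by omega)

lemma dig_eq_zero_of_lt {p n j : ℕ} (h : n < p ^ j) : dig p n j = 0 := by
  simp [dig, Nat.div_eq_of_lt h]

lemma geom (p : ℕ) (hp : 1 < p) : ∀ J, (p - 1) * ∑ j ∈ range J, p ^ j + 1 = p ^ J := by
  intro J
  induction J with
  | zero => simp
  | succ J ih =>
    rw [Finset.sum_range_succ, Nat.mul_add, pow_succ]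
    have hpJ : 1 ≤ p ^ J := Nat.one_le_pow _ _ (by omega)
    have : (p - 1) * p ^ J + p ^ J = p ^ J * p := by
      have : (p - 1) * p ^ J = p * p ^ J - p ^ J := by
        rw [Nat.sub_mul, one_mul]
      rw [this]
      have h2 : p ^ J ≤ p * p ^ J := Nat.le_mul_of_pos_left _ (by omega)
      have h3 : p ^ J * p = p * p ^ J := Nat.mul_comm _ _
      omega
    omega

lemma mod_pow_sum (p n : ℕ) : ∀ J, n % p ^ J = ∑ j ∈ range J, dig p n j * p ^ j := by
  intro J
  induction J with
  | zero => simp [Nat.mod_one]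
  | succ J ih =>
    rw [pow_succ, Nat.mod_mul, Finset.sum_range_succ, ih, dig]
    ring

lemma self_eq_sum_dig {p n J : ℕ} (h : n < p ^ J) :
    n = ∑ j ∈ range J, dig p n j * p ^ j := by
  rw [← mod_pow_sum, Nat.mod_eq_of_lt h]

lemma sum_dig_lt {p : ℕ} (hp : 1 < p) (b : ℕ → ℕ) (hb : ∀ j, b j < p) (J : ℕ) :
    ∑ j ∈ range J, b j * p ^ j < p ^ J := by
  calc ∑ j ∈ range J, b j * p ^ j ≤ ∑ j ∈ range J, (p-1) * p ^ j := by
        apply Finset.sum_le_sum; intro j _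
        exact Nat.mul_le_mul_right _ (by have := hb j; omega)
    _ < p ^ J := by rw [← Finset.mul_sum]; have := geom p hp J; omega

/-- digit extraction from a digit expansion -/
lemma dig_sum_eq {p : ℕ} (hp : 1 < p) (b : ℕ → ℕ) (hb : ∀ j, b j < p) :
    ∀ J i, dig p (∑ j ∈ range J, b j * p ^ j) i = if i < J then b i else 0 := by
  intro J
  induction J with
  | zero => simp [dig]
  | succ J ih =>
    have hlt : ∑ j ∈ range J, b j * p ^ j < p ^ J := sum_dig_lt hp b hb J
    intro i
    rw [Finset.sum_range_succ]
    rcases lt_trichotomy i J with hi | hi | hi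
    · have h1 : (∑ j ∈ range J, b j * p ^ j + b J * p ^ J) / p ^ i
          = (∑ j ∈ range J, b j * p ^ j) / p ^ i + b J * p ^ (J - i) := by
        have he : b J * p ^ J = (b J * p ^ (J - i)) * p ^ i := by
          rw [mul_assoc, ← pow_add]; congr 2; omega
        rw [he, Nat.add_mul_div_right _ _ (Nat.pow_pos (n := i) (by omega))]
      have h2 : p ∣ b J * p ^ (J - i) :=
        Dvd.dvd.mul_left (dvd_pow_self p (by omega)) _
      unfold dig at *
      rw [h1, Nat.add_mod, Nat.eq_zero_of_dvd_of_lt (Nat.dvd_mod_iff (dvd_refl p) |>.mpr h2)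
        (Nat.mod_lt _ (by omega)), add_zero, Nat.mod_mod_of_dvd _ (dvd_refl p), ih]
      simp only [hi, if_pos, hi.trans (Nat.lt_succ_self J)]
    · subst hi
      unfold dig
      have h1 : (∑ j ∈ range i, b j * p ^ j + b i * p ^ i) / p ^ i
          = (∑ j ∈ range i, b j * p ^ j) / p ^ i + b i :=
        Nat.add_mul_div_right _ _ (Nat.pow_pos (n := i) (by omega))
      rw [h1, Nat.div_eq_of_lt hlt, zero_add, Nat.mod_eq_of_lt (hb i)]
      simp
    · have : ∑ j ∈ range J, b j * p ^ j + b J * p ^ J < p ^ i := by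
        have h2 : ∑ j ∈ range (J+1), b j * p ^ j < p ^ (J+1) := sum_dig_lt hp b hb (J+1)
        rw [Finset.sum_range_succ] at h2
        exact h2.trans_le (Nat.pow_le_pow_right (by omega) (by omega))
      rw [dig_eq_zero_of_lt this]
      have : ¬ (i < J + 1) := by omega
      simp [this]


/-- base-`q` digit sum, `q = p ^ f`. -/
def lq (p f n : ℕ) : ℕ := (Nat.digits (p ^ f) n).sum

lemma lq_eq {p f : ℕ} (hp : 1 < p) (hf : 0 < f) :
    ∀ J n, n < p ^ (f * J) → lq p f n = ∑ j ∈ range (f * J), dig p n j * p ^ (j % f) := by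
  have hq : 1 < p ^ f := Nat.one_lt_pow (by omega) hp
  intro J
  induction J with
  | zero =>
    intro n hn
    have hn' : n = 0 := by simp at hn; omega
    subst hn'; simp [lq]
  | succ J ih =>
    intro n hn
    rcases Nat.eq_zero_or_pos n with rfl | hn0
    · simp [lq, dig]
    have hrec : lq p f n = n % p ^ f + lq p f (n / p ^ f) := by
      rw [lq, Nat.digits_def' hq hn0]; simp [lq]
    have hdivlt : n / p ^ f < p ^ (f * J) := by
      rw [Nat.div_lt_iff_lt_mul (Nat.pow_pos (n := f) (by omega))]
      calc n < p ^ (f * (J+1)) := hn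
        _ = p ^ (f * J) * p ^ f := by rw [← pow_add]; ring_nf
    have hsplit : f * (J + 1) = f + f * J := by ring
    rw [hrec, hsplit, Finset.sum_range_add, ih _ hdivlt]
    congr 1
    · rw [mod_pow_sum p n f]
      apply Finset.sum_congr rfl
      intro j hj
      rw [Nat.mod_eq_of_lt (Finset.mem_range.mp hj)]
    · apply Finset.sum_congr rfl
      intro j _
      congr 1
      · show dig p (n / p ^ f) j = dig p n (f + j)
        unfold dig
        rw [pow_add, ← Nat.div_div_eq_div_mul]
      · rw [Nat.add_mod_left]

lemma exists_pow_bound {p f : ℕ} (hp : 1 < p) (hf : 0 < f) (n : ℕ) :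
    ∃ J, n < p ^ (f * J) := by
  refine ⟨n + 1, ?_⟩
  calc n < p ^ (n+1) := (Nat.lt_pow_self hp : n < p ^ n) |>.trans_le (Nat.pow_le_pow_right (by omega) (by omega))
    _ ≤ p ^ (f * (n+1)) := Nat.pow_le_pow_right (by omega) (Nat.le_mul_of_pos_left _ hf)

lemma lq_pos {p f : ℕ} (hp : 1 < p) (hf : 0 < f) {n : ℕ} (hn : 0 < n) : 0 < lq p f n := by
  obtain ⟨J, hJ⟩ := exists_pow_bound hp hf n
  rw [lq_eq hp hf J n hJ]
  by_contra h
  push_neg at h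
  rw [Nat.le_zero, Finset.sum_eq_zero_iff] at h
  have : n = 0 := by
    rw [self_eq_sum_dig (p := p) (J := f * J) hJ]
    apply Finset.sum_eq_zero
    intro j hj
    have := h j hj
    have hd : dig p n j = 0 := by
      have hppos : 0 < p ^ (j % f) := Nat.pow_pos (n := _) (by omega)
      exact Nat.mul_eq_zero.mp this |>.elim id (fun h => absurd h (by omega))
    simp [hd]
  omega

lemma lq_modeq {p f : ℕ} (hp : 1 < p) (hf : 0 < f) (n : ℕ) :
    n ≡ lq p f n [MOD p ^ f - 1] := by
  have hq : 1 < p ^ f := Nat.one_lt_pow (by omega) hp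
  rcases Nat.lt_or_ge (p ^ f - 1) 2 with h | h
  · interval_cases h' : p ^ f - 1
    · omega
    · exact Nat.modEq_one
  · refine Nat.modEq_digits_sum (p ^ f - 1) (p ^ f) ?_ n
    have h4 : (p ^ f - 1 + 1) % (p ^ f - 1) = 1 := by
      rw [Nat.add_mod_left]
      exact Nat.mod_eq_of_lt (by omega)
    have h3 : p ^ f - 1 + 1 = p ^ f := by omega
    rw [h3] at h4
    exact h4

lemma lq_ge {p f : ℕ} (hp : 1 < p) (hf : 0 < f) {n : ℕ} (hn : 0 < n)
    (hd : (p ^ f - 1) ∣ n) : p ^ f - 1 ≤ lq p f n := by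
  have h1 : (p ^ f - 1) ∣ lq p f n := by
    have := (lq_modeq hp hf n).symm
    have h0 : lq p f n ≡ 0 [MOD p ^ f - 1] :=
      this.trans ((Nat.modEq_zero_iff_dvd).mpr hd)
    exact (Nat.modEq_zero_iff_dvd).mp h0
  exact Nat.le_of_dvd (lq_pos hp hf hn) h1

lemma dig_mul_pow {p : ℕ} (hp : 1 < p) (n i j : ℕ) :
    dig p (n * p ^ i) j = if j < i then 0 else dig p n (j - i) := by
  unfold dig
  split
  · next h =>
    have : n * p ^ i / p ^ j = n * p ^ (i - j) := by
      have : n * p ^ i = n * p ^ (i - j) * p ^ j := by rw [mul_assoc, ← pow_add]; congr 2; omega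
      rw [this, Nat.mul_div_cancel _ (Nat.pow_pos (n := _) (by omega))]
    rw [this]
    obtain ⟨c, hc⟩ : p ∣ n * p ^ (i - j) := Dvd.dvd.mul_left (dvd_pow_self p (by omega)) n
    rw [hc, Nat.mul_mod_right]
  · next h =>
    congr 1
    have : p ^ j = p ^ i * p ^ (j - i) := by rw [← pow_add]; congr 1; omega
    rw [this, ← Nat.div_div_eq_div_mul, Nat.mul_div_cancel _ (Nat.pow_pos (n := _) (by omega))]

lemma lq_shift {p f : ℕ} (hp : 1 < p) (hf : 0 < f) {k J : ℕ} (hJ : k < p ^ J)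
    {i : ℕ} (hi : i < f) :
    lq p f (k * p ^ i) = ∑ j ∈ range J, dig p k j * p ^ ((j + i) % f) := by
  have hNb : J + i ≤ f * (J + f) := by
    have h5 : J + f ≤ f * (J + f) := Nat.le_mul_of_pos_left _ hf
    omega
  have hkN : k * p ^ i < p ^ (f * (J + f)) := by
    calc k * p ^ i < p ^ J * p ^ i :=
          (Nat.mul_lt_mul_right (Nat.pow_pos (n := _) (by omega))).mpr hJ
      _ = p ^ (J + i) := by rw [← pow_add]
      _ ≤ p ^ (f * (J + f)) := Nat.pow_le_pow_right (by omega) hNb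
  rw [lq_eq hp hf (J + f) _ hkN]
  set N := f * (J + f) with hN
  have hsplit : N = i + (N - i) := by omega
  rw [hsplit, Finset.sum_range_add]
  have h1 : ∑ j ∈ range i, dig p (k * p ^ i) j * p ^ (j % f) = 0 := by
    apply Finset.sum_eq_zero
    intro j hj
    rw [dig_mul_pow hp, if_pos (Finset.mem_range.mp hj)]
    simp
  rw [h1, zero_add]
  have h2 : ∀ j ∈ range (N - i), dig p (k * p ^ i) (i + j) * p ^ ((i + j) % f)
      = dig p k j * p ^ ((j + i) % f) := by
    intro j _
    rw [dig_mul_pow hp, if_neg (by omega)]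
    have he : i + j - i = j := by omega
    rw [he, Nat.add_comm i j]
  rw [Finset.sum_congr rfl h2]
  symm
  apply Finset.sum_subset
  · apply Finset.range_subset_range.mpr; omega
  · intro j _ hj
    rw [Finset.mem_range, not_lt] at hj
    have : dig p k j = 0 := dig_eq_zero_of_lt (hJ.trans_le (Nat.pow_le_pow_right (by omega) hj))
    simp [this]


section Vec

variable {f : ℕ} [NeZero f]

/-- the top index `f - 1`. -/
def ftop : Fin f := ⟨f - 1, by have := Nat.pos_of_ne_zero (NeZero.ne f); omega⟩

@[simp] lemma ftop_val : (ftop : Fin f).val = f - 1 := rfl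

/-- cyclic weighted digit sum. -/
def Lv (p : ℕ) (i : Fin f) (γ : Fin f → ℕ) : ℕ :=
  ∑ r : Fin f, γ r * p ^ ((r + i : Fin f) : ℕ)

lemma pow_step {p : ℕ} (hp : 1 < p) (a : Fin f) :
    p * p ^ (a : ℕ) = p ^ ((a + 1 : Fin f) : ℕ) + if a = ftop then p ^ f - 1 else 0 := by
  have hfpos : 0 < f := Nat.pos_of_ne_zero (NeZero.ne f)
  by_cases ha : a = ftop
  · subst ha
    have h1 : ((ftop + 1 : Fin f) : ℕ) = 0 := by
      rw [Fin.val_add, ftop_val, Fin.val_one']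
      rcases Nat.eq_or_lt_of_le hfpos with h | h
      · simp [← h]
      · have : 1 % f = 1 := Nat.mod_eq_of_lt h
        rw [this]
        have : f - 1 + 1 = f := by omega
        rw [this, Nat.mod_self]
    rw [h1, if_pos rfl]
    simp only [ftop_val, pow_zero]
    have : p * p ^ (f - 1) = p ^ f := by
      rw [← pow_succ']
      congr 1
      omega
    have h2 : 1 ≤ p ^ f := Nat.one_le_pow _ _ (by omega)
    omega
  · have hav : (a : ℕ) < f - 1 := by
      have := a.isLt
      have : (a : ℕ) ≠ f - 1 := fun h => ha (Fin.ext (by rw [ftop_val, h]))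
      omega
    have h1 : ((a + 1 : Fin f) : ℕ) = (a : ℕ) + 1 := by
      rw [Fin.val_add, Fin.val_one']
      have h2 : 1 % f = 1 % f := rfl
      have h3 : (a : ℕ) + 1 % f ≤ (a:ℕ) + 1 := by
        have := Nat.mod_le 1 f; omega
      have h4 : (a : ℕ) + 1 % f = (a:ℕ) + 1 := by
        have : 1 % f = 1 ∨ 1 % f = 0 ∧ f = 1 := by
          rcases Nat.lt_or_ge 1 f with h | h
          · left; exact Nat.mod_eq_of_lt h
          · right; have : f = 1 := by omega
            subst this; simp
        rcases this with h | ⟨h, hf1⟩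
        · rw [h]
        · omega
      rw [h4]
      exact Nat.mod_eq_of_lt (by omega)
    rw [h1, if_neg ha, add_zero, ← pow_succ']

lemma Lstep {p : ℕ} (hp : 1 < p) (i : Fin f) (γ : Fin f → ℕ) :
    p * Lv p i γ = Lv p (i + 1) γ + (p ^ f - 1) * γ (ftop - i) := by
  unfold Lv
  rw [Finset.mul_sum]
  have key : ∀ r : Fin f, p * (γ r * p ^ ((r + i : Fin f) : ℕ))
      = γ r * p ^ ((r + (i + 1) : Fin f) : ℕ)
        + if r = ftop - i then (p ^ f - 1) * γ r else 0 := by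
    intro r
    have := pow_step hp (r + i)
    have h2 : p * (γ r * p ^ ((r + i : Fin f) : ℕ)) = γ r * (p * p ^ ((r + i : Fin f) : ℕ)) := by ring
    rw [h2, this, Nat.mul_add, ← add_assoc, mul_ite, Nat.mul_zero]
    have hcond : (r + i = ftop) ↔ (r = ftop - i) := by
      constructor
      · intro h; rw [← h]; ring
      · intro h; rw [h]; ring
    have hassoc : r + i + 1 = r + (i + 1) := by ring
    rw [hassoc]
    congr 1
    simp only [hcond]
    split <;> ring
  rw [Finset.sum_congr rfl (fun r _ => key r), Finset.sum_add_distrib,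
    Finset.sum_ite_eq' Finset.univ (ftop - i) (fun r => (p ^ f - 1) * γ r)]
  simp [Nat.mul_comm]

lemma Lv_iter {p : ℕ} (hp : 1 < p) (i : Fin f) (γ : Fin f → ℕ) :
    ∀ j : ℕ, p ^ j * Lv p i γ = Lv p (i + (j : Fin f)) γ
      + (p ^ f - 1) * ∑ t ∈ Finset.range j, p ^ (j - 1 - t) * γ (ftop - i - ((t : ℕ) : Fin f)) := by
  intro j
  induction j with
  | zero => simp
  | succ j ih =>
    have h1 : p ^ (j + 1) * Lv p i γ = p * (p ^ j * Lv p i γ) := by ring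
    rw [h1, ih, Nat.mul_add, Lstep hp (i + (j : Fin f)) γ]
    have hc1 : i + ((j : ℕ) : Fin f) + 1 = i + (((j+1 : ℕ)) : Fin f) := by
      push_cast; ring
    have hc2 : ftop - (i + ((j : ℕ) : Fin f)) = ftop - i - ((j:ℕ) : Fin f) := by ring
    rw [hc1, hc2]
    have hsum : ∑ t ∈ Finset.range (j+1), p ^ (j + 1 - 1 - t) * γ (ftop - i - ((t : ℕ) : Fin f))
        = p * ∑ t ∈ Finset.range j, p ^ (j - 1 - t) * γ (ftop - i - ((t : ℕ) : Fin f))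
          + γ (ftop - i - ((j:ℕ) : Fin f)) := by
      rw [Finset.sum_range_succ, Finset.mul_sum]
      congr 1
      · apply Finset.sum_congr rfl
        intro t ht
        have ht' := Finset.mem_range.mp ht
        have : j + 1 - 1 - t = (j - 1 - t) + 1 := by omega
        rw [this, pow_succ]
        ring
      · have : j + 1 - 1 - j = 0 := by omega
        rw [this, pow_zero, one_mul]
    rw [hsum]
    ring

lemma Lv_expand {p : ℕ} (s : Fin f) (γ : Fin f → ℕ) :
    Lv p (ftop - s) γ = γ s * p ^ (f - 1)
      + ∑ t ∈ Finset.range (f - 1), γ (s + ((t + 1 : ℕ) : Fin f)) * p ^ t := by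
  have hfpos : 0 < f := Nat.pos_of_ne_zero (NeZero.ne f)
  have h0 : Lv p (ftop - s) γ = ∑ u : Fin f, γ (s + u) * p ^ ((u + ftop : Fin f) : ℕ) := by
    unfold Lv
    rw [← Equiv.sum_comp (Equiv.addLeft s) (fun r => γ r * p ^ ((r + (ftop - s) : Fin f) : ℕ))]
    apply Finset.sum_congr rfl
    intro u _
    have : (Equiv.addLeft s) u = s + u := rfl
    rw [this]
    congr 2
    ring
  rw [h0]
  have h1 : ∑ u : Fin f, γ (s + u) * p ^ ((u + ftop : Fin f) : ℕ)
      = ∑ u ∈ Finset.range f, γ (s + (u : Fin f)) * p ^ (((u : Fin f) + ftop : Fin f) : ℕ) := by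
    rw [← Fin.sum_univ_eq_sum_range (fun u => γ (s + (u : Fin f)) * p ^ (((u : Fin f) + ftop : Fin f) : ℕ)) f]
    apply Finset.sum_congr rfl
    intro u _
    rw [Fin.cast_val_eq_self]
  rw [h1]
  have hf1 : f = (f - 1) + 1 := by omega
  have h2 : ∑ u ∈ Finset.range f, γ (s + (u : Fin f)) * p ^ (((u : Fin f) + ftop : Fin f) : ℕ)
      = ∑ t ∈ Finset.range (f-1), γ (s + ((t+1 : ℕ) : Fin f)) * p ^ ((((t+1:ℕ) : Fin f) + ftop : Fin f) : ℕ)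
        + γ (s + ((0:ℕ) : Fin f)) * p ^ ((((0:ℕ) : Fin f) + ftop : Fin f) : ℕ) := by
    rw [← Finset.sum_range_succ'
      (fun u => γ (s + (u : Fin f)) * p ^ (((u : Fin f) + ftop : Fin f) : ℕ)) (f-1), ← hf1]
  have hlast : γ (s + ((0:ℕ) : Fin f)) * p ^ ((((0:ℕ) : Fin f) + ftop : Fin f) : ℕ)
      = γ s * p ^ (f - 1) := by
    rw [Nat.cast_zero, add_zero, zero_add, ftop_val]
  rw [h2, hlast, add_comm]
  congr 1
  apply Finset.sum_congr rfl
  intro t ht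
  have ht' : t < f - 1 := Finset.mem_range.mp ht
  have hexp : ((((t+1:ℕ) : Fin f) + ftop : Fin f) : ℕ) = t := by
    rw [Fin.val_add, Fin.val_natCast, ftop_val]
    have e1 : (t + 1) % f = t + 1 := Nat.mod_eq_of_lt (by omega)
    rw [e1]
    have e2 : t + 1 + (f - 1) = t + f := by omega
    rw [e2, Nat.add_mod_right]
    exact Nat.mod_eq_of_lt (by omega)
  rw [hexp]

lemma sum_pow_shift (p : ℕ) (i : Fin f) :
    ∑ x : Fin f, p ^ ((x + i : Fin f) : ℕ) = ∑ x : Fin f, p ^ (x : ℕ) := by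
  rw [← Equiv.sum_comp (Equiv.addRight i) (fun x => p ^ (x : ℕ))]
  rfl

lemma geom_fin {p : ℕ} (hp : 1 < p) :
    (p - 1) * ∑ x : Fin f, p ^ (x : ℕ) + 1 = p ^ f := by
  rw [Fin.sum_univ_eq_sum_range (fun j => p ^ j) f]
  exact geom p hp f

end Vec


section NoBad

variable {f : ℕ} [NeZero f]

lemma no_bad {p : ℕ} (hp : 1 < p) (d : ℕ) (hd : 1 ≤ d) (γ : Fin f → ℕ) (s : Fin f)
    (hs : γ s + 2 ≤ p)
    (hL : ∀ i : Fin f, d * (p ^ f - 1) < Lv p i γ)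
    (hnc : ∀ r : Fin f, p ≤ γ r → Lv p (ftop - r) γ ≤ (d + 1) * (p ^ f - 1)) : False := by
  have hfpos : 0 < f := Nat.pos_of_ne_zero (NeZero.ne f)
  set R := p ^ (f - 1) with hR
  have hq : p ^ f = p * R := by rw [hR, ← pow_succ']; congr 1; omega
  have hRpos : 1 ≤ R := Nat.one_le_pow _ _ (by omega)
  set T := ∑ t ∈ Finset.range (f - 1), γ (s + ((t + 1 : ℕ) : Fin f)) * p ^ t with hT
  have hE : Lv p (ftop - s) γ = γ s * R + T := Lv_expand s γ
  -- T ≥ 2R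
  have hT2 : 2 * R ≤ T := by
    have h1 := hL (ftop - s)
    rw [hE] at h1
    have h2 : γ s * R ≤ (p - 2) * R := Nat.mul_le_mul_right _ (by omega)
    have h3 : p ^ f - 1 ≤ d * (p ^ f - 1) := Nat.le_mul_of_pos_left _ hd
    have h4 : (p - 2) * R + 2 * R = p * R := by
      rw [← Nat.add_mul]
      congr 1
      omega
    have h5 : 2 * R ≤ p * R := Nat.mul_le_mul_right _ (by omega)
    omega
  -- the set of positions with a large entry
  set Sset := (Finset.range (f - 1)).filter (fun t => p ≤ γ (s + ((t + 1 : ℕ) : Fin f))) with hSset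
  have hSne : Sset.Nonempty := by
    by_contra hne
    rw [Finset.not_nonempty_iff_eq_empty] at hne
    have hbound : T ≤ (p - 1) * ∑ t ∈ Finset.range (f - 1), p ^ t := by
      rw [hT, Finset.mul_sum]
      apply Finset.sum_le_sum
      intro t ht
      have : ¬ p ≤ γ (s + ((t + 1 : ℕ) : Fin f)) := by
        intro hcon
        have : t ∈ Sset := Finset.mem_filter.mpr ⟨ht, hcon⟩
        rw [hne] at this
        exact absurd this (Finset.notMem_empty t)
      exact Nat.mul_le_mul_right _ (by omega)
    have hgeom := geom p hp (f - 1)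
    omega
  set tstar := Sset.max' hSne with htstar
  have htmem := Finset.max'_mem Sset hSne
  rw [Finset.mem_filter, Finset.mem_range] at htmem
  obtain ⟨htlt, htbig⟩ := htmem
  set j := tstar + 1 with hj
  set rstar : Fin f := s + ((j : ℕ) : Fin f) with hrstar
  -- tail bound : T + p^j ≤ A + R
  set A := ∑ t ∈ Finset.range j, γ (s + ((t + 1 : ℕ) : Fin f)) * p ^ t with hA
  have htail : T + p ^ j ≤ A + R := by
    have hsplit : A + ∑ t ∈ Finset.Ico j (f - 1), γ (s + ((t + 1 : ℕ) : Fin f)) * p ^ t = T := by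
      rw [hA, hT, ← Finset.sum_range_add_sum_Ico _ (by omega : j ≤ f - 1)]
    have htb : ∑ t ∈ Finset.Ico j (f - 1), γ (s + ((t + 1 : ℕ) : Fin f)) * p ^ t
        ≤ (p - 1) * ∑ t ∈ Finset.Ico j (f - 1), p ^ t := by
      rw [Finset.mul_sum]
      apply Finset.sum_le_sum
      intro t ht
      rw [Finset.mem_Ico] at ht
      have hnotmem : ¬ p ≤ γ (s + ((t + 1 : ℕ) : Fin f)) := by
        intro hcon
        have : t ∈ Sset := Finset.mem_filter.mpr ⟨Finset.mem_range.mpr (by omega), hcon⟩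
        have := Finset.le_max' Sset t this
        omega
      exact Nat.mul_le_mul_right _ (by omega)
    have hgsplit : ∑ t ∈ Finset.range j, p ^ t + ∑ t ∈ Finset.Ico j (f-1), p ^ t
        = ∑ t ∈ Finset.range (f-1), p ^ t := Finset.sum_range_add_sum_Ico _ (by omega)
    have hg1 := geom p hp (f - 1)
    have hg2 := geom p hp j
    have hmdist : (p-1) * (∑ t ∈ Finset.range j, p ^ t + ∑ t ∈ Finset.Ico j (f-1), p ^ t)
        = (p-1) * ∑ t ∈ Finset.range j, p ^ t + (p-1) * ∑ t ∈ Finset.Ico j (f-1), p ^ t :=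
      Nat.mul_add _ _ _
    rw [← hgsplit, hmdist] at hg1
    omega
  -- the iterated identity
  have hiter := Lv_iter hp (ftop - rstar) γ j
  have hidx : ftop - rstar + ((j : ℕ) : Fin f) = ftop - s := by
    rw [hrstar]; ring
  have hsum_eq : ∑ t ∈ Finset.range j, p ^ (j - 1 - t) * γ (ftop - (ftop - rstar) - ((t:ℕ) : Fin f)) = A := by
    have hre := Finset.sum_range_reflect
      (fun u => p ^ u * γ (rstar - ((j - 1 - u : ℕ) : Fin f))) j
    have hlhs : ∑ t ∈ Finset.range j, p ^ (j - 1 - t) * γ (ftop - (ftop - rstar) - ((t:ℕ) : Fin f))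
        = ∑ t ∈ Finset.range j, p ^ (j-1-t) * γ (rstar - ((j - 1 - (j-1-t) : ℕ) : Fin f)) := by
      apply Finset.sum_congr rfl
      intro t ht
      have ht' := Finset.mem_range.mp ht
      have e1 : j - 1 - (j - 1 - t) = t := by omega
      have e2 : ftop - (ftop - rstar) - ((t:ℕ) : Fin f) = rstar - ((t:ℕ) : Fin f) := by ring
      rw [e1, e2]
    rw [hlhs, hre]
    apply Finset.sum_congr rfl
    intro t ht
    have ht' := Finset.mem_range.mp ht
    have e2 : ((j:ℕ) : Fin f) - ((j - 1 - t : ℕ) : Fin f) = ((t + 1 : ℕ) : Fin f) := by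
      rw [← Nat.cast_sub (by omega : j - 1 - t ≤ j)]
      congr 1
      omega
    have hc : rstar - ((j - 1 - t : ℕ) : Fin f) = s + ((t + 1 : ℕ) : Fin f) := by
      rw [hrstar]
      calc s + ((j:ℕ) : Fin f) - ((j - 1 - t : ℕ) : Fin f)
          = s + (((j:ℕ) : Fin f) - ((j - 1 - t : ℕ) : Fin f)) := by ring
        _ = s + ((t + 1 : ℕ) : Fin f) := by rw [e2]
    rw [hc]
    ring
  rw [hidx, hsum_eq] at hiter
  -- use hnc at rstar
  have hrbig : p ≤ γ rstar := htbig
  have hB := hnc rstar hrbig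
  -- final arithmetic in ℤ
  have hLs := hL (ftop - s)
  set B := Lv p (ftop - rstar) γ with hBdef
  set Ls := Lv p (ftop - s) γ with hLsdef
  have hPR : p ^ j ≤ R := by
    rw [hR]
    exact Nat.pow_le_pow_right (by omega) (by omega)
  have hRQ : R ≤ p ^ f - 1 := by
    have : 2 * R ≤ p * R := Nat.mul_le_mul_right _ (by omega)
    omega
  -- cast to ℤ
  have hq1 : (1:ℕ) ≤ p ^ f := Nat.one_le_pow _ _ (by omega)
  zify [hq1] at hiter hB hLs hE hRQ ⊢
  set Q : ℤ := (p:ℤ) ^ f - 1 with hQ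
  have hQpos : (1:ℤ) ≤ Q := by
    rw [hQ]
    have : (2:ℤ) ≤ (p:ℤ)^f := by
      calc (2:ℤ) ≤ (p:ℤ) := by exact_mod_cast hp
        _ ≤ (p:ℤ)^f := by
          nth_rewrite 1 [← pow_one (p:ℤ)]
          exact pow_le_pow_right₀ (by exact_mod_cast Nat.one_le_of_lt hp) (by omega)
    omega
  have hT2' : (2:ℤ) * R ≤ T := by exact_mod_cast hT2
  have htail' : (T:ℤ) + (p:ℤ)^j ≤ A + R := by exact_mod_cast htail
  have hq' : ((p:ℤ))^f = p * R := by exact_mod_cast hq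
  have hPR' : ((p:ℤ))^j ≤ R := by exact_mod_cast hPR
  have hgs : ((γ s : ℤ)) + 2 ≤ p := by exact_mod_cast hs
  have hRpos' : (1:ℤ) ≤ R := by exact_mod_cast hRpos
  have hPpos : (1:ℤ) ≤ (p:ℤ)^j := one_le_pow₀ (by exact_mod_cast Nat.one_le_of_lt hp)
  have hd' : (1:ℤ) ≤ d := by exact_mod_cast hd
  -- now pure integer arithmetic
  -- hiter : p^j * B = Ls + Q * A
  -- hB : B ≤ (d+1) * Q ; hLs : d * Q < Ls ; hE : Ls = γ s * R + T
  have h1 : (T:ℤ) ≥ (d:ℤ) * Q + 1 - ((p:ℤ) - 2) * R := by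
    have : ((γ s : ℤ)) * R ≤ ((p:ℤ) - 2) * R := by
      apply mul_le_mul_of_nonneg_right _ (by linarith)
      linarith
    linarith
  have h2 : (A:ℤ) ≥ ((d:ℤ) - 1) * Q + R + (p:ℤ)^j := by
    have hpr : ((p:ℤ) - 1) * R = Q + 1 - R := by
      rw [hQ, hq']; ring
    linarith [htail', h1, hpr]
  have h3 : (Q:ℤ) * A ≥ Q * (((d:ℤ) - 1) * Q + R + (p:ℤ)^j) :=
    mul_le_mul_of_nonneg_left h2 (by linarith)
  have h4 : ((p:ℤ))^j * B ≤ (p:ℤ)^j * (((d:ℤ)+1) * Q) :=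
    mul_le_mul_of_nonneg_left hB (by linarith)
  have h5 : ((p:ℤ))^j * Q ≤ R * Q :=
    mul_le_mul_of_nonneg_right hPR' (by linarith)
  have h6 : (d:ℤ) * ((p:ℤ)^j * Q) ≤ (d:ℤ) * (R * Q) :=
    mul_le_mul_of_nonneg_left h5 (by linarith)
  have h7 : ((d:ℤ) - 1) * (R * Q) ≤ ((d:ℤ) - 1) * (Q * Q) := by
    apply mul_le_mul_of_nonneg_left _ (by linarith)
    apply mul_le_mul_of_nonneg_right hRQ (by linarith)
  have h8 : (0:ℤ) ≤ (d:ℤ) * Q := mul_nonneg (by linarith) (by linarith)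
  linarith [hiter, hLs, h3, h4, h6, h7, h8]

end NoBad


section Core

variable {f : ℕ} [NeZero f]

omit [NeZero f] in
lemma Lv_add (p : ℕ) (i : Fin f) (a b : Fin f → ℕ) :
    Lv p i (fun x => a x + b x) = Lv p i a + Lv p i b := by
  unfold Lv
  rw [← Finset.sum_add_distrib]
  apply Finset.sum_congr rfl
  intro x _
  ring

omit [NeZero f] in
lemma Lv_single (p : ℕ) (i : Fin f) (c : ℕ) (r : Fin f) :
    Lv p i (fun x => if x = r then c else 0) = c * p ^ ((r + i : Fin f) : ℕ) := by
  unfold Lv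
  have h : ∀ x : Fin f, (if x = r then c else 0) * p ^ ((x + i : Fin f) : ℕ)
      = if x = r then c * p ^ ((r + i : Fin f) : ℕ) else 0 := by
    intro x
    by_cases hx : x = r <;> simp [hx]
  rw [Finset.sum_congr rfl (fun x _ => h x),
    Finset.sum_ite_eq' Finset.univ r (fun _ => c * p ^ ((r + i : Fin f) : ℕ))]
  simp

lemma Lv_const (p : ℕ) (hp : 1 < p) (i : Fin f) :
    Lv p i (fun _ => p - 1) = p ^ f - 1 := by
  unfold Lv
  rw [← Finset.mul_sum, sum_pow_shift p i]
  have := geom_fin (f := f) hp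
  omega

lemma exists_pos_of_sum_pos' {ι : Type*} [Fintype ι] {g : ι → ℕ}
    (h : 0 < ∑ x, g x) : ∃ x, 0 < g x := by
  by_contra hc
  push_neg at hc
  simp only [Nat.le_zero] at hc
  rw [Finset.sum_eq_zero (fun x _ => hc x)] at h
  omega

lemma core {p : ℕ} (hp : 1 < p) :
    ∀ N : ℕ, ∀ (d : ℕ) (γ : Fin f → ℕ), (∑ x, γ x) ≤ N →
      (∀ i : Fin f, d * (p ^ f - 1) < Lv p i γ) →
      ∃ u : Fin (d + 1) → Fin f → ℕ,
        (∀ x, ∑ t, u t x = γ x) ∧ (∀ t, ∃ x, 0 < u t x) ∧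
        (∀ t, t ≠ 0 → (p ^ f - 1) ∣ Lv p 0 (u t)) := by
  have hfpos : 0 < f := Nat.pos_of_ne_zero (NeZero.ne f)
  intro N
  induction N using Nat.strong_induction_on with
  | _ N IH =>
  intro d γ hsum hL
  cases d with
  | zero =>
    refine ⟨fun _ => γ, fun x => by simp, fun t => ?_, fun t ht => absurd (Fin.fin_one_eq_zero t) ht⟩
    have h0 := hL 0
    have hpos : 0 < Lv p 0 γ := by omega
    obtain ⟨x, hx⟩ := exists_pos_of_sum_pos' (g := fun x => γ x * p ^ ((x + 0 : Fin f) : ℕ)) hpos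
    refine ⟨x, ?_⟩
    by_contra h
    push_neg at h
    rw [Nat.le_zero] at h
    rw [h] at hx
    simp at hx
  | succ d =>
    set q1 := p ^ f - 1 with hq1
    by_cases hcarry : ∃ r : Fin f, p ≤ γ r ∧ (d + 2) * q1 < Lv p (ftop - r) γ
    · -- carry move
      obtain ⟨r, hrp, hrL⟩ := hcarry
      set γ'' : Fin f → ℕ := fun x => γ x - (if x = r then p else 0) with hγ''
      set γ' : Fin f → ℕ := fun x => γ'' x + (if x = r + 1 then 1 else 0) with hγ'
      have hpt : ∀ x, γ x = γ'' x + (if x = r then p else 0) := by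
        intro x
        by_cases hx : x = r <;> simp [hγ'', hx] <;> omega
      have hLγ : ∀ i, Lv p i γ = Lv p i γ'' + p * p ^ ((r + i : Fin f) : ℕ) := by
        intro i
        calc Lv p i γ = Lv p i (fun x => γ'' x + (if x = r then p else 0)) :=
              congrArg (Lv p i) (funext hpt)
          _ = Lv p i γ'' + p * p ^ ((r + i : Fin f) : ℕ) := by
              rw [Lv_add, Lv_single]
      have hLγ' : ∀ i, Lv p i γ' = Lv p i γ'' + p ^ ((r + 1 + i : Fin f) : ℕ) := by
        intro i
        calc Lv p i γ' = Lv p i γ'' + Lv p i (fun x => if x = r + 1 then 1 else 0) :=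
              Lv_add p i γ'' _
          _ = Lv p i γ'' + p ^ ((r + 1 + i : Fin f) : ℕ) := by rw [Lv_single, one_mul]
      have hrel : ∀ i, Lv p i γ = Lv p i γ' + (if r + i = ftop then q1 else 0) := by
        intro i
        rw [hLγ i, hLγ' i, pow_step hp (r + i)]
        have h5 : r + i + 1 = r + 1 + i := by ring
        rw [h5]
        ring
      have hL' : ∀ i, (d + 1) * q1 < Lv p i γ' := by
        intro i
        have h1 := hrel i
        by_cases hc : r + i = ftop
        · have hieq : i = ftop - r := by rw [← hc]; ring
          have h2 := hrL
          rw [← hieq] at h2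
          rw [if_pos hc] at h1
          have h3 : (d + 2) * q1 = (d + 1) * q1 + q1 := by ring
          omega
        · rw [if_neg hc, add_zero] at h1
          have h2 := hL i
          have h3 : (d + 1 + 1) * q1 = (d + 1) * q1 + q1 := by ring
          omega
      have hsum'' : ∑ x, γ'' x + p = ∑ x, γ x := by
        rw [Finset.sum_congr rfl (fun x (_ : x ∈ Finset.univ) => hpt x), Finset.sum_add_distrib,
          Finset.sum_ite_eq' Finset.univ r (fun _ => p)]
        simp
      have hsum' : ∑ x, γ' x = ∑ x, γ'' x + 1 := by
        rw [hγ', Finset.sum_add_distrib, Finset.sum_ite_eq' Finset.univ (r+1) (fun _ => 1)]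
        simp
      have hlt : ∑ x, γ' x < N := by
        have : γ r ≤ ∑ x, γ x := Finset.single_le_sum (fun x _ => Nat.zero_le _) (Finset.mem_univ r)
        omega
      obtain ⟨u', hu'sum, hu'pos, hu'div⟩ := IH (∑ x, γ' x) hlt (d + 1) γ' (le_refl _) hL'
      obtain ⟨t0, ht0⟩ : ∃ t0, 0 < u' t0 (r + 1) := by
        apply exists_pos_of_sum_pos'
        rw [hu'sum (r + 1)]
        simp [hγ']
      set v : Fin f → ℕ :=
        fun x => (u' t0 x + (if x = r then p else 0)) - (if x = r + 1 then 1 else 0) with hv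
      have hvpt : ∀ x, v x + (if x = r + 1 then 1 else 0) = u' t0 x + (if x = r then p else 0) := by
        intro x
        by_cases h2 : x = r + 1
        · subst h2
          by_cases h1 : r + 1 = r <;> simp [hv, h1] <;> omega
        · simp [hv, if_neg h2]
      have hsx : ∀ x, ∑ t, Function.update u' t0 v t x + u' t0 x = ∑ t, u' t x + v x := by
        intro x
        have hupd : ∀ t, Function.update u' t0 v t x = Function.update (fun t => u' t x) t0 (v x) t := by
          intro t
          by_cases h : t = t0 <;> simp [Function.update_apply, h]
        rw [Finset.sum_congr rfl (fun t (_ : t ∈ Finset.univ) => hupd t),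
          Finset.sum_update_of_mem (Finset.mem_univ t0)]
        have he := Finset.add_sum_erase Finset.univ (fun t => u' t x) (Finset.mem_univ t0)
        rw [← Finset.erase_eq]
        have hb1 : ∑ x1 ∈ Finset.univ.erase t0, (fun t => u' t x) x1
            = ∑ x1 ∈ Finset.univ.erase t0, u' x1 x := rfl
        have hb2 : ∑ x1 : Fin (d + 1 + 1), (fun t => u' t x) x1 = ∑ t, u' t x := rfl
        have he' : u' t0 x + ∑ x1 ∈ Finset.univ.erase t0, u' x1 x = ∑ t, u' t x := he
        omega
      refine ⟨Function.update u' t0 v, ?_, ?_, ?_⟩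
      · intro x
        have h1 := hsx x
        rw [hu'sum x] at h1
        have h2 := hvpt x
        have h3 := hpt x
        have h4 : γ' x = γ'' x + (if x = r + 1 then 1 else 0) := rfl
        omega
      · intro t
        by_cases h : t = t0
        · refine ⟨r, ?_⟩
          rw [h, Function.update_self]
          have h2 := hvpt r
          rw [if_pos rfl] at h2
          have h3 : (if r = r + 1 then 1 else 0) ≤ 1 := by split <;> omega
          omega
        · obtain ⟨x, hx⟩ := hu'pos t
          exact ⟨x, by simpa [Function.update_apply, h] using hx⟩
      · intro t ht
        by_cases h : t = t0
        · rw [h] at ht ⊢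
          rw [Function.update_self]
          have hWv : Lv p 0 (fun x => v x + (if x = r + 1 then 1 else 0))
              = Lv p 0 (fun x => u' t0 x + (if x = r then p else 0)) :=
            congrArg (Lv p 0) (funext hvpt)
          rw [Lv_add, Lv_add, Lv_single, Lv_single, one_mul] at hWv
          have hps := pow_step hp (r + 0)
          have h5 : r + 0 + 1 = r + 1 + 0 := by ring
          rw [h5, ← hq1] at hps
          have hb3 : Lv p 0 (fun x => v x) = Lv p 0 v := rfl
          have hb4 : Lv p 0 (fun x => u' t0 x) = Lv p 0 (u' t0) := rfl
          have hWv2 : Lv p 0 v = Lv p 0 (u' t0) + (if r + 0 = ftop then q1 else 0) := by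
            omega
          rw [hWv2]
          refine dvd_add (hu'div t0 ht) ?_
          split
          · exact dvd_refl _
          · exact dvd_zero _
        · rw [Function.update_apply, if_neg h]
          exact hu'div t ht
    · -- peel move
      push_neg at hcarry
      have hall : ∀ x, p - 1 ≤ γ x := by
        intro x
        by_contra hx
        exact no_bad hp (d + 1) (by omega) γ x (by omega) hL
          (fun r hr => by
            have h1 := hcarry r hr
            have h3 : (d + 2) * q1 = (d + 1 + 1) * (p ^ f - 1) := by rw [hq1]
            omega)
      set γ' : Fin f → ℕ := fun x => γ x - (p - 1) with hγ'
      have hpt : ∀ x, γ x = γ' x + (p - 1) := by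
        intro x
        have := hall x
        simp [hγ']
        omega
      have hLrel : ∀ i, Lv p i γ = Lv p i γ' + q1 := by
        intro i
        calc Lv p i γ = Lv p i (fun x => γ' x + (p - 1)) :=
              congrArg (Lv p i) (funext hpt)
          _ = Lv p i γ' + q1 := by rw [Lv_add, Lv_const p hp]
      have hL' : ∀ i, d * q1 < Lv p i γ' := by
        intro i
        have h1 := hLrel i
        have h2 := hL i
        have h3 : (d + 1) * q1 = d * q1 + q1 := by ring
        omega
      have hsumrel : ∑ x, γ x = ∑ x, γ' x + f * (p - 1) := by
        rw [Finset.sum_congr rfl (fun x (_ : x ∈ Finset.univ) => hpt x), Finset.sum_add_distrib]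
        congr 1
        rw [Finset.sum_const, Finset.card_univ, Fintype.card_fin, smul_eq_mul]
      have hlt : ∑ x, γ' x < N := by
        have h6 : 1 * 1 ≤ f * (p - 1) := Nat.mul_le_mul (by omega) (by omega)
        omega
      obtain ⟨u', hu'sum, hu'pos, hu'div⟩ := IH (∑ x, γ' x) hlt d γ' (le_refl _) hL'
      refine ⟨Fin.snoc u' (fun _ => p - 1), ?_, ?_, ?_⟩
      · intro x
        rw [Fin.sum_univ_castSucc]
        simp only [Fin.snoc_castSucc, Fin.snoc_last]
        rw [hu'sum x]
        have h7 := hpt x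
        omega
      · intro t
        refine Fin.lastCases ?_ ?_ t
        · refine ⟨⟨0, hfpos⟩, ?_⟩
          simp only [Fin.snoc_last]
          omega
        · intro t'
          obtain ⟨x, hx⟩ := hu'pos t'
          exact ⟨x, by simpa [Fin.snoc_castSucc] using hx⟩
      · intro t
        refine Fin.lastCases ?_ ?_ t
        · intro _
          simp only [Fin.snoc_last]
          rw [Lv_const p hp]
        · intro t' ht'
          have ht'' : t' ≠ 0 := by
            intro h
            apply ht'
            rw [h, Fin.castSucc_zero]
          simp only [Fin.snoc_castSucc]
          exact hu'div t' ht''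

end Core


section Distrib

lemma pick {ι : Type*} [DecidableEq ι] (S : Finset ι) (s : ι → ℕ) :
    ∀ (m : ℕ), m ≤ ∑ j ∈ S, s j →
    ∃ b : ι → ℕ, (∀ j, b j ≤ s j) ∧ (∀ j, j ∉ S → b j = 0) ∧ ∑ j ∈ S, b j = m := by
  induction S using Finset.induction_on with
  | empty =>
    intro m hm
    simp only [Finset.sum_empty, Nat.le_zero] at hm
    exact ⟨fun _ => 0, fun j => Nat.zero_le _, fun _ _ => rfl, by simp [hm]⟩
  | insert a S ha ih =>
    intro m hm
    rw [Finset.sum_insert ha] at hm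
    by_cases hma : m ≤ s a
    · refine ⟨fun j => if j = a then m else 0, ?_, ?_, ?_⟩
      · intro j
        by_cases hj : j = a <;> simp [hj, hma]
      · intro j hj
        have hne : j ≠ a := fun h => hj (by rw [h]; exact Finset.mem_insert_self a S)
        simp [hne]
      · rw [Finset.sum_insert ha, if_pos rfl]
        have hz : ∀ j ∈ S, (if j = a then m else 0) = 0 := by
          intro j hj
          have hne : j ≠ a := fun h => ha (by rwa [h] at hj)
          simp [hne]
        rw [Finset.sum_congr rfl hz]
        simp
    · obtain ⟨b', hb'le, hb'supp, hb'sum⟩ := ih (m - s a) (by omega)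
      refine ⟨fun j => if j = a then s a else b' j, ?_, ?_, ?_⟩
      · intro j
        by_cases hj : j = a <;> simp [hj, hb'le j]
      · intro j hj
        have hne : j ≠ a := fun h => hj (by rw [h]; exact Finset.mem_insert_self a S)
        simp [hne]
        exact hb'supp j (fun h => hj (Finset.mem_insert_of_mem h))
      · rw [Finset.sum_insert ha, if_pos rfl]
        have hz : ∀ j ∈ S, (if j = a then s a else b' j) = b' j := by
          intro j hj
          have hne : j ≠ a := fun h => ha (by rwa [h] at hj)
          simp [hne]
        rw [Finset.sum_congr rfl hz, hb'sum]
        omega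

lemma distrib {ι : Type*} [DecidableEq ι] (S : Finset ι) :
    ∀ (n : ℕ) (s : ι → ℕ) (v : Fin n → ℕ), ∑ j ∈ S, s j = ∑ t, v t →
    ∃ a : Fin n → ι → ℕ, (∀ j ∈ S, ∑ t, a t j = s j) ∧ (∀ t, ∑ j ∈ S, a t j = v t)
      ∧ (∀ t j, j ∉ S → a t j = 0) := by
  intro n
  induction n with
  | zero =>
    intro s v hv
    simp only [Finset.univ_eq_empty, Finset.sum_empty] at hv
    refine ⟨fun _ _ => 0, ?_, fun t => t.elim0, fun _ _ _ => rfl⟩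
    intro j hj
    have : ∀ j ∈ S, s j = 0 := by
      rw [← Finset.sum_eq_zero_iff_of_nonneg (fun j _ => Nat.zero_le _)]
      exact hv
    simp [this j hj]
  | succ n IH =>
    intro s v hv
    rw [Fin.sum_univ_succ] at hv
    obtain ⟨b, hble, hbsupp, hbsum⟩ := pick S s (v 0) (by omega)
    have hv' : ∑ j ∈ S, (s j - b j) = ∑ t : Fin n, v t.succ := by
      have h1 : ∑ j ∈ S, (s j - b j) + ∑ j ∈ S, b j = ∑ j ∈ S, s j := by
        rw [← Finset.sum_add_distrib]
        apply Finset.sum_congr rfl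
        intro j _
        have := hble j
        omega
      omega
    obtain ⟨a', ha'col, ha'row, ha'supp⟩ := IH (fun j => s j - b j) (fun t => v t.succ) hv'
    refine ⟨Fin.cases b a', ?_, ?_, ?_⟩
    · intro j hj
      rw [Fin.sum_univ_succ]
      simp only [Fin.cases_zero, Fin.cases_succ]
      rw [ha'col j hj]
      have := hble j
      omega
    · intro t
      refine Fin.cases ?_ ?_ t
      · simpa using hbsum
      · intro t'
        simpa using ha'row t'
    · intro t j hj
      refine Fin.cases ?_ ?_ t
      · simpa using hbsupp j hj
      · intro t'
        simpa using ha'supp t' j hj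

end Distrib

section Regroup

variable {f : ℕ} [NeZero f]

lemma regroup (p : ℕ) (c : ℕ → ℕ) (J : ℕ) (i : Fin f) :
    ∑ j ∈ Finset.range J, c j * p ^ ((j + (i : ℕ)) % f)
      = Lv p i (fun x => ∑ j ∈ Finset.range J, if ((j : ℕ) : Fin f) = x then c j else 0) := by
  unfold Lv
  have h1 : ∀ x : Fin f, (∑ j ∈ Finset.range J, if ((j : ℕ) : Fin f) = x then c j else 0)
      * p ^ ((x + i : Fin f) : ℕ)
      = ∑ j ∈ Finset.range J, (if ((j : ℕ) : Fin f) = x then c j * p ^ ((x + i : Fin f) : ℕ) else 0) := by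
    intro x
    rw [Finset.sum_mul]
    apply Finset.sum_congr rfl
    intro j _
    by_cases hj : ((j : ℕ) : Fin f) = x <;> simp [hj]
  rw [Finset.sum_congr rfl (fun x (_ : x ∈ Finset.univ) => h1 x), Finset.sum_comm]
  apply Finset.sum_congr rfl
  intro j _
  rw [Finset.sum_ite_eq Finset.univ ((j : ℕ) : Fin f)
    (fun x => c j * p ^ ((x + i : Fin f) : ℕ))]
  simp only [Finset.mem_univ, if_pos]
  congr 1
  rw [Fin.val_add, Fin.val_natCast]
  rw [Nat.mod_add_mod]

end Regroup


section Assemble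

lemma modeq_sum {n : ℕ} {ι : Type*} (s : Finset ι) (g h : ι → ℕ)
    (H : ∀ i ∈ s, g i ≡ h i [MOD n]) : (∑ i ∈ s, g i) ≡ ∑ i ∈ s, h i [MOD n] := by
  induction s using Finset.cons_induction with
  | empty => rfl
  | cons a s ha ih =>
    rw [Finset.sum_cons, Finset.sum_cons]
    exact Nat.ModEq.add (H a (Finset.mem_cons_self a s))
      (ih (fun i hi => H i (Finset.mem_cons_of_mem hi)))

lemma pow_modeq {p f : ℕ} (hp : 1 < p) (hf : 0 < f) (j : ℕ) :
    p ^ j ≡ p ^ (j % f) [MOD p ^ f - 1] := by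
  have h1 : p ^ j = (p ^ f) ^ (j / f) * p ^ (j % f) := by
    rw [← pow_mul, ← pow_add, Nat.div_add_mod]
  rw [h1]
  have h2 : (p ^ f) ≡ 1 [MOD p ^ f - 1] := by
    have : (1:ℕ) ≤ p ^ f := Nat.one_le_pow _ _ (by omega)
    exact ((Nat.modEq_iff_dvd' this).mpr (dvd_refl _)).symm
  calc (p ^ f) ^ (j / f) * p ^ (j % f)
      ≡ 1 ^ (j / f) * p ^ (j % f) [MOD p ^ f - 1] :=
        Nat.ModEq.mul_right _ (Nat.ModEq.pow _ h2)
    _ = p ^ (j % f) := by rw [one_pow, one_mul]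

/-- The "easy" direction: a member of `V_d(k)` forces all `l(k p^i)` to be large. -/
lemma lower_bound {p f : ℕ} (hp : 1 < p) (hf : 0 < f) {d k : ℕ} (m : Fin (d+1) → ℕ)
    (hnc : ∀ j : ℕ, (∑ t, m t / p ^ j % p) = k / p ^ j % p)
    (hsum : (∑ t, m t) = k)
    (hm0 : 0 < m 0)
    (hqe : ∀ t : Fin (d+1), 0 < (t : ℕ) → 0 < m t ∧ (p ^ f - 1) ∣ m t)
    (i : ℕ) (hi : i < f) : d * (p ^ f - 1) + 1 ≤ lq p f (k * p ^ i) := by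
  obtain ⟨J0, hJ0⟩ := exists_pow_bound hp hf k
  set J := f * J0 with hJdef
  have hJ : k < p ^ J := hJ0
  have hmb : ∀ t, m t < p ^ J := by
    intro t
    have : m t ≤ k := hsum ▸ Finset.single_le_sum (fun t _ => Nat.zero_le _) (Finset.mem_univ t)
    omega
  have key : lq p f (k * p ^ i) = ∑ t, lq p f (m t * p ^ i) := by
    rw [lq_shift hp hf hJ hi]
    have h1 : ∀ j ∈ Finset.range J, dig p k j * p ^ ((j + i) % f)
        = ∑ t, dig p (m t) j * p ^ ((j + i) % f) := by
      intro j _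
      rw [← Finset.sum_mul]
      congr 1
      exact (hnc j).symm
    rw [Finset.sum_congr rfl h1, Finset.sum_comm]
    apply Finset.sum_congr rfl
    intro t _
    rw [lq_shift hp hf (hmb t) hi]
  rw [key, Fin.sum_univ_succ]
  have h0 : 1 ≤ lq p f (m 0 * p ^ i) := by
    apply lq_pos hp hf
    exact Nat.mul_pos hm0 (Nat.pow_pos (n := _) (by omega))
  have hrest : d * (p ^ f - 1) ≤ ∑ t : Fin d, lq p f (m t.succ * p ^ i) := by
    have := Finset.card_nsmul_le_sum Finset.univ (fun t : Fin d => lq p f (m t.succ * p ^ i))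
      (p ^ f - 1) ?_
    · simpa [mul_comm] using this
    · intro t _
      obtain ⟨hpos, hdvd⟩ := hqe t.succ (by simp)
      exact lq_ge hp hf (Nat.mul_pos hpos (Nat.pow_pos (n := _) (by omega)))
        (hdvd.mul_right _)
  omega

/-- The "hard" direction: construction of a member of `V_d(k)`. -/
lemma exists_mem {p f : ℕ} (hp : 1 < p) (hf : 0 < f) {d k : ℕ} (hk : 0 < k)
    (hL : ∀ i, i < f → d * (p ^ f - 1) + 1 ≤ lq p f (k * p ^ i)) :
    ∃ m : Fin (d+1) → ℕ, (∑ t, m t) = k ∧ (∀ j, (∑ t, m t / p ^ j % p) = k / p ^ j % p)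
      ∧ 0 < m 0 ∧ (∀ t : Fin (d+1), 0 < (t : ℕ) → 0 < m t ∧ (p ^ f - 1) ∣ m t) := by
  haveI : NeZero f := ⟨hf.ne'⟩
  obtain ⟨J0, hJ0⟩ := exists_pow_bound hp hf k
  set J := f * J0 with hJdef
  have hJ : k < p ^ J := hJ0
  set gam : Fin f → ℕ :=
    fun x => ∑ j ∈ Finset.range J, if ((j : ℕ) : Fin f) = x then dig p k j else 0 with hgam
  have hbridge : ∀ i : Fin f, lq p f (k * p ^ (i : ℕ)) = Lv p i gam := by
    intro i
    rw [lq_shift hp hf hJ i.isLt, regroup]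
  have hLv : ∀ i : Fin f, d * (p ^ f - 1) < Lv p i gam := by
    intro i
    rw [← hbridge i]
    have := hL (i : ℕ) i.isLt
    omega
  obtain ⟨u, husum, hupos, hudiv⟩ := core hp (∑ x, gam x) d gam (le_refl _) hLv
  -- distribute within each residue class
  have hdist : ∀ x : Fin f,
      ∃ a : Fin (d+1) → ℕ → ℕ,
        (∀ j ∈ (Finset.range J).filter (fun j => ((j : ℕ) : Fin f) = x), ∑ t, a t j = dig p k j) ∧
        (∀ t, ∑ j ∈ (Finset.range J).filter (fun j => ((j : ℕ) : Fin f) = x), a t j = u t x) ∧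
        (∀ t j, j ∉ (Finset.range J).filter (fun j => ((j : ℕ) : Fin f) = x) → a t j = 0) := by
    intro x
    apply distrib _ (d+1) (dig p k) (fun t => u t x)
    rw [Finset.sum_filter]
    exact (husum x).symm
  choose A hAcol hArow hAsupp using hdist
  set a : Fin (d+1) → ℕ → ℕ := fun t j => A ((j : ℕ) : Fin f) t j with ha
  have hacol : ∀ j, j < J → ∑ t, a t j = dig p k j := by
    intro j hj
    exact hAcol ((j : ℕ) : Fin f) j
      (Finset.mem_filter.mpr ⟨Finset.mem_range.mpr hj, rfl⟩)
  have hasupp : ∀ t j, ¬ j < J → a t j = 0 := by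
    intro t j hj
    apply hAsupp ((j : ℕ) : Fin f) t j
    intro hmem
    exact hj (Finset.mem_range.mp (Finset.mem_filter.mp hmem).1)
  have harow : ∀ t (x : Fin f),
      ∑ j ∈ (Finset.range J).filter (fun j => ((j : ℕ) : Fin f) = x), a t j = u t x := by
    intro t x
    rw [← hArow x t]
    apply Finset.sum_congr rfl
    intro j hj
    have hx := (Finset.mem_filter.mp hj).2
    rw [ha]
    simp only []
    rw [hx]
  have hale : ∀ t j, a t j ≤ dig p k j := by
    intro t j
    by_cases hj : j < J
    · rw [← hacol j hj]
      exact Finset.single_le_sum (f := fun t' => a t' j) (fun t' _ => Nat.zero_le _)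
        (Finset.mem_univ t)
    · rw [hasupp t j hj]
      exact Nat.zero_le _
  have haltp : ∀ t j, a t j < p := fun t j => (hale t j).trans_lt (dig_lt hp k j)
  set m : Fin (d+1) → ℕ := fun t => ∑ j ∈ Finset.range J, a t j * p ^ j with hm
  have hdig : ∀ t j, dig p (m t) j = if j < J then a t j else 0 :=
    fun t j => dig_sum_eq hp (a t) (haltp t) J j
  have hmsum : (∑ t, m t) = k := by
    rw [hm]
    simp only []
    rw [Finset.sum_comm]
    rw [self_eq_sum_dig hJ]
    apply Finset.sum_congr rfl
    intro j hj
    rw [← Finset.sum_mul, hacol j (Finset.mem_range.mp hj)]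
  have hmnc : ∀ j, (∑ t, m t / p ^ j % p) = k / p ^ j % p := by
    intro j
    have h1 : (∑ t, dig p (m t) j) = dig p k j := by
      by_cases hj : j < J
      · rw [Finset.sum_congr rfl (fun t (_ : t ∈ Finset.univ) => hdig t j), ]
        simp only [if_pos hj]
        exact hacol j hj
      · rw [Finset.sum_congr rfl (fun t (_ : t ∈ Finset.univ) => hdig t j)]
        simp only [if_neg hj]
        rw [dig_eq_zero_of_lt (hJ.trans_le (Nat.pow_le_pow_right (by omega) (by omega)))]
        simp
    exact h1
  have hmpos : ∀ t, 0 < m t := by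
    intro t
    obtain ⟨x, hx⟩ := hupos t
    rw [← harow t x] at hx
    have hne : ∑ j ∈ (Finset.range J).filter (fun j => ((j : ℕ) : Fin f) = x), a t j ≠ 0 := by omega
    obtain ⟨j, hjmem, hja⟩ := Finset.exists_ne_zero_of_sum_ne_zero hne
    have hjr : j ∈ Finset.range J := (Finset.mem_filter.mp hjmem).1
    have hle1 : a t j * p ^ j ≤ ∑ j' ∈ Finset.range J, a t j' * p ^ j' :=
      Finset.single_le_sum (f := fun j' => a t j' * p ^ j') (fun j' _ => Nat.zero_le _) hjr
    have hpj : 0 < p ^ j := Nat.pow_pos (n := _) (by omega)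
    have hle2 : 0 < a t j * p ^ j := Nat.mul_pos (by omega) hpj
    exact lt_of_lt_of_le hle2 hle1
  have hmdvd : ∀ t : Fin (d+1), t ≠ 0 → (p ^ f - 1) ∣ m t := by
    intro t ht
    have hmod : m t ≡ Lv p 0 (u t) [MOD p ^ f - 1] := by
      have h1 : (∑ j ∈ Finset.range J, a t j * p ^ j)
          ≡ ∑ j ∈ Finset.range J, a t j * p ^ (j % f) [MOD p ^ f - 1] := by
        apply modeq_sum
        intro j _
        exact Nat.ModEq.mul_left _ (pow_modeq hp hf j)
      have h2 : ∑ j ∈ Finset.range J, a t j * p ^ (j % f) = Lv p 0 (u t) := by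
        have h4 := regroup (f := f) p (a t) J 0
        have h3 : ∀ j ∈ Finset.range J, a t j * p ^ ((j + ((0 : Fin f) : ℕ)) % f)
            = a t j * p ^ (j % f) := by
          intro j _
          have h0v : ((0 : Fin f) : ℕ) = 0 := rfl
          rw [h0v, Nat.add_zero]
        rw [Finset.sum_congr rfl h3] at h4
        rw [h4]
        congr 1
        funext x
        rw [← harow t x, Finset.sum_filter]
      exact h2 ▸ h1
    have h5 := hudiv t ht
    have h6 : Lv p 0 (u t) ≡ 0 [MOD p ^ f - 1] := (Nat.modEq_zero_iff_dvd).mpr h5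
    exact (Nat.modEq_zero_iff_dvd).mp (hmod.trans h6)
  refine ⟨m, hmsum, hmnc, hmpos 0, ?_⟩
  intro t ht
  refine ⟨hmpos t, hmdvd t ?_⟩
  intro h
  rw [h] at ht
  simp at ht

end Assemble

end SheatsAux

/-- Sheats: `V_d(k) = {m ∈ U_d(k) : m_0 > 0}` is empty iff `d ≥ L_k`. -/
theorem Vset_empty_iff
    (p f : ℕ) (hp : p.Prime) (hf : 0 < f) (k d : ℕ) (hk : 0 < k) :
    {m : Fin (d + 1) → ℕ | m ∈ Uset p (p ^ f) d k ∧ 0 < m 0} = ∅ ↔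
      Lval p f k hf ≤ (d : ℚ) := by
  have hp2 : 1 < p := hp.one_lt
  have hq2 : 1 < p ^ f := Nat.one_lt_pow (by omega) hp2
  have hc : ((p : ℚ) ^ f - 1) = ((p ^ f - 1 : ℕ) : ℚ) := by
    rw [Nat.cast_sub (by omega)]
    push_cast
    ring
  have hcpos : (0:ℚ) < ((p ^ f - 1 : ℕ) : ℚ) := by
    have : 1 ≤ p ^ f - 1 := by omega
    exact_mod_cast Nat.lt_of_lt_of_le Nat.zero_lt_one this
  have hkey : (Lval p f k hf ≤ (d : ℚ)) ↔
      ∃ i < f, SheatsAux.lq p f (k * p ^ i) ≤ d * (p ^ f - 1) := by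
    unfold Lval
    erw [Finset.inf'_le_iff]
    constructor
    · rintro ⟨i, hi, hle⟩
      refine ⟨i, Finset.mem_range.mp hi, ?_⟩
      rw [hc, div_le_iff₀ hcpos] at hle
      have hsum_eq : ((p ^ f).digits (k * p ^ i)).sum = SheatsAux.lq p f (k * p ^ i) := rfl
      rw [hsum_eq] at hle
      have h9 : ((SheatsAux.lq p f (k * p ^ i) : ℕ) : ℚ) ≤ ((d * (p ^ f - 1) : ℕ) : ℚ) := by
        push_cast
        exact hle
      exact_mod_cast h9
    · rintro ⟨i, hi, hle⟩
      refine ⟨i, Finset.mem_range.mpr hi, ?_⟩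
      rw [hc, div_le_iff₀ hcpos]
      have hsum_eq : ((p ^ f).digits (k * p ^ i)).sum = SheatsAux.lq p f (k * p ^ i) := rfl
      rw [hsum_eq]
      have h9 : ((SheatsAux.lq p f (k * p ^ i) : ℕ) : ℚ) ≤ ((d * (p ^ f - 1) : ℕ) : ℚ) := by
        exact_mod_cast hle
      push_cast at h9
      exact h9
  rw [hkey]
  constructor
  · intro hempty
    by_contra hgt
    push_neg at hgt
    have hL : ∀ i, i < f → d * (p ^ f - 1) + 1 ≤ SheatsAux.lq p f (k * p ^ i) := by
      intro i hi
      have := hgt i hi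
      omega
    obtain ⟨m, hmsum, hmnc, hm0, hmq⟩ := SheatsAux.exists_mem hp2 hf hk hL
    have hmem : m ∈ {m : Fin (d + 1) → ℕ | m ∈ Uset p (p ^ f) d k ∧ 0 < m 0} :=
      ⟨⟨⟨hmsum, hmnc⟩, hmq⟩, hm0⟩
    rw [hempty] at hmem
    exact hmem
  · rintro ⟨i, hi, hlq⟩
    rw [Set.eq_empty_iff_forall_notMem]
    rintro m ⟨⟨⟨hmsum, hmnc⟩, hmq⟩, hm0⟩
    have := SheatsAux.lower_bound hp2 hf m hmnc hmsum hm0 hmq i hi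
    omega
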